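/- arXiv:1708.03046 — 3 statements merged into one kernel-verified Lean document; each statement's English description precedes it below -/
import Mathlib

section
/- Let c > 0 be a constant and let γ = γ_l be any sequence with −c/2 < γ_l ≤ 0 for all l. Then J_c(γ) ≥ I_c(γ) for all large l, and log J_c(γ) = (1 + o(1))·[(c − γ)·√(2 n log p / k) − (c − γ)²·n/(2k) + log(n/(2 p log p))] as l → ∞. -/
open Filter Topology

lemma sqrt_le_sqrt_add_sqrt_sub {a b : ℝ} (ha : 0 ≤ a) (hab : a ≤ b) :
    Real.sqrt b ≤ Real.sqrt a + Real.sqrt (b - a) := by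
  have h1 : Real.sqrt b ≤ Real.sqrt ((Real.sqrt a + Real.sqrt (b - a))^2) := by
    apply Real.sqrt_le_sqrt
    have h2 : Real.sqrt a ^ 2 = a := Real.sq_sqrt ha
    have h3 : Real.sqrt (b - a) ^ 2 = b - a := Real.sq_sqrt (by linarith)
    nlinarith [Real.sqrt_nonneg a, Real.sqrt_nonneg (b - a)]
  rwa [Real.sqrt_sq (by positivity)] at h1


/-- `Ic k n p c γ` is the largest integer `I ∈ {1, …, k}` such that
`γ + √(2 k log(k/I)/n) > √(2 k log(p−k)/n) − c`, and `0` if no such `I` exists. -/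
noncomputable def Ic (k n p : ℕ) (c γ : ℝ) : ℕ :=
  sSup {I : ℕ | 1 ≤ I ∧ I ≤ k ∧
    Real.sqrt (2 * k * Real.log ((p : ℝ) - k) / n) - c <
      γ + Real.sqrt (2 * k * Real.log ((k : ℝ) / I) / n)}

/-- `Jc k n p c γ` is the largest integer `J ∈ {1, …, k}` such that
`−γ + √(2 k log(k/J)/n) > √(2 k log(p−k)/n) − c`, and `0` if no such `J` exists. -/
noncomputable def Jc (k n p : ℕ) (c γ : ℝ) : ℕ := Ic k n p c (-γ)

noncomputable def Ccon (c c₁ c₂ c₃ c₄ c₅ : ℝ) : ℝ :=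
  |Real.log c₄| + |Real.log c₅| + Real.log 2 + Real.log 100 +
    (3*c/2) * Real.sqrt (2*Real.log 100/c₄) + (3*c/2)^2/(2*c₄) +
    |Real.log c₁| + |Real.log c₃| + c₂ + 5

noncomputable def Xfun (k n p : ℕ) (c γ : ℝ) : ℝ :=
  (c - γ) * Real.sqrt (2 * n * Real.log p / k)
    - (c - γ) ^ 2 * n / (2 * k) + Real.log (n / (2 * p * Real.log p))

set_option maxHeartbeats 2000000 in
lemma pointwise (c c₁ c₂ c₃ c₄ c₅ : ℝ) (hc : 0 < c) (hc₁ : 0 < c₁) (hc₂ : 0 < c₂)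
    (hc₃ : 0 < c₃) (hc₄ : 0 < c₄) (hc₅ : 0 < c₅)
    (k n p : ℕ) (γ : ℝ) (hγ1 : -c/2 < γ) (hγ2 : γ ≤ 0)
    (hn1 : 1 ≤ (n:ℝ)) (hk1 : 1 ≤ (k:ℝ))
    (hnp1 : c₁ * p / (Real.log p) ^ (c₂:ℝ) ≤ (n:ℝ)) (hnp2 : (n:ℝ) ≤ c₃ * p)
    (hkn1 : c₄ * n ≤ (k:ℝ)) (hkn2 : (k:ℝ) ≤ 0.99 * p)
    (hkn3 : (k:ℝ) ≤ c₅ * n * (Real.log p) ^ (0.99:ℝ))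
    (hM : 2*Real.log 100 + 9*c^2/(4*c₄) + 3 ≤ Real.log p)
    (hsm : (Ccon c c₁ c₂ c₃ c₄ c₅) * (1 + Real.log (Real.log p)) ≤
      c * Real.sqrt (2/c₅) * (Real.log p) ^ (0.005:ℝ) / 8)
    (hbig : 8 ≤ c * Real.sqrt (2/c₅) * (Real.log p) ^ (0.005:ℝ)) :
    0 < Xfun k n p c γ ∧
    c * Real.sqrt (2/c₅) * (Real.log p) ^ (0.005:ℝ) / 2 ≤ Xfun k n p c γ ∧
    |Real.log (Jc k n p c γ) - Xfun k n p c γ| ≤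
      2 * (Ccon c c₁ c₂ c₃ c₄ c₅) * (1 + Real.log (Real.log p)) := by
  set P : ℝ := (p:ℝ) with hPdef
  set N : ℝ := (n:ℝ) with hNdef
  set K : ℝ := (k:ℝ) with hKdef
  set L : ℝ := Real.log P with hLdef
  set δ : ℝ := c - γ with hδdef
  -- basic facts
  have hN0 : 0 < N := by linarith
  have hK0 : 0 < K := by linarith
  have hP1 : 1 ≤ P := by nlinarith
  have hP0 : 0 < P := by linarith
  have hl2 : (0:ℝ) < Real.log 2 := Real.log_pos (by norm_num)
  have hl100 : (0:ℝ) < Real.log 100 := Real.log_pos (by norm_num)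
  have hl2_1 : Real.log 2 ≤ 1 := by
    have h := Real.exp_one_gt_d9
    have := Real.log_lt_log (by norm_num : (0:ℝ) < 2) (by linarith : (2:ℝ) < Real.exp 1)
    rw [Real.log_exp] at this; linarith
  have hL3 : 3 ≤ L := by
    have h9 : (0:ℝ) ≤ 9*c^2/(4*c₄) := by positivity
    linarith
  have hL0 : 0 < L := by linarith
  have hLL1 : 1 ≤ Real.log L := by
    have h := Real.exp_one_lt_d9
    have h2 : Real.exp 1 ≤ L := by linarith
    have := Real.log_le_log (Real.exp_pos 1) h2
    rwa [Real.log_exp] at this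
  have hLL0 : 0 ≤ Real.log L := by linarith
  have hPK : 0.01 * P ≤ P - K := by linarith
  have hPK0 : 0 < P - K := by nlinarith
  have hδc : c ≤ δ := by rw [hδdef]; linarith
  have hδ0 : 0 < δ := lt_of_lt_of_le hc hδc
  have hδ32 : δ ≤ 3*c/2 := by rw [hδdef]; linarith
  -- bounds on log (P - K)
  have hlogPK_ub : Real.log (P - K) ≤ L := Real.log_le_log hPK0 (by linarith)
  have hlogPK_lb : L - Real.log 100 ≤ Real.log (P - K) := by
    have h1 : Real.log (0.01 * P) ≤ Real.log (P - K) := Real.log_le_log (by linarith) hPK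
    have h2 : Real.log (0.01 * P) = Real.log 0.01 + L := Real.log_mul (by norm_num) (ne_of_gt hP0)
    have h3 : Real.log (0.01:ℝ) = - Real.log 100 := by
      rw [show (0.01:ℝ) = 100⁻¹ by norm_num, Real.log_inv]
    linarith
  have h9c : (0:ℝ) ≤ 9*c^2/(4*c₄) := by positivity
  have hlogPK_pos : 0 < Real.log (P - K) := by linarith
  have hlogPK_half : L / 2 ≤ Real.log (P - K) := by linarith
  -- R and its properties
  set R : ℝ := Real.sqrt (2 * K * Real.log (P - K) / N) with hRdef
  have hNK : N / K ≤ 1 / c₄ := by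
    rw [div_le_div_iff₀ hK0 hc₄]; linarith
  have hKN : c₄ ≤ K / N := by
    rw [le_div_iff₀ hN0]; linarith
  have hRδ : δ < R := by
    rw [hRdef, Real.lt_sqrt hδ0.le]
    have h1 : c₄ * L ≤ 2 * K * Real.log (P - K) / N := by
      rw [le_div_iff₀ hN0]
      have e1 : c₄ * N * L ≤ K * L := by
        have := mul_le_mul_of_nonneg_right hkn1 hL0.le
        linarith
      have e2 : K * L ≤ 2 * K * Real.log (P - K) := by
        have := mul_le_mul_of_nonneg_left hlogPK_half (by linarith : (0:ℝ) ≤ 2 * K)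
        nlinarith [hK0, hL0]
      linarith
    have hδsq : δ^2 ≤ (3*c/2)^2 := pow_le_pow_left₀ hδ0.le hδ32 2
    have h2 : (3*c/2)^2 < c₄ * L := by
      have e3 : c₄ * (2*Real.log 100 + 9*c^2/(4*c₄) + 3) ≤ c₄ * L :=
        mul_le_mul_of_nonneg_left hM hc₄.le
      have e4 : c₄ * (2*Real.log 100 + 9*c^2/(4*c₄) + 3) =
          2*c₄*Real.log 100 + 9*c^2/4 + 3*c₄ := by
        field_simp
      have e5 : (0:ℝ) ≤ c₄ * Real.log 100 := by positivity
      have e6 : (3*c/2)^2 = 9*c^2/4 := by ring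
      linarith
    linarith
  set T : ℝ := Real.log K - N * (R - δ)^2 / (2*K) with hTdef
  have hRδ' : 0 < R - δ := by linarith
  set S : Set ℕ := {J : ℕ | 1 ≤ J ∧ J ≤ k ∧
    Real.sqrt (2 * (k:ℝ) * Real.log ((p:ℝ) - (k:ℝ)) / (n:ℝ)) - c <
      -γ + Real.sqrt (2 * (k:ℝ) * Real.log ((k:ℝ) / (J:ℝ)) / (n:ℝ))} with hSdef
  have hJcdef : Jc k n p c γ = sSup S := rfl
  have hmem : ∀ J : ℕ, J ∈ S ↔ 1 ≤ J ∧ (J:ℝ) < Real.exp T := by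
    intro J
    have h2K : (0:ℝ) < 2*K := by linarith
    constructor
    · rintro ⟨hJ1, hJk, hineq⟩
      refine ⟨hJ1, ?_⟩
      have hJ0 : (0:ℝ) < (J:ℝ) := by exact_mod_cast hJ1
      have h2 : R - δ < Real.sqrt (2*K*Real.log (K/(J:ℝ))/N) := by
        rw [hδdef]; rw [hRdef]; linarith [hineq]
      have h3 : (R - δ)^2 < 2*K*Real.log (K/(J:ℝ))/N := (Real.lt_sqrt hRδ'.le).mp h2
      have hlogdiv : Real.log (K/(J:ℝ)) = Real.log K - Real.log (J:ℝ) :=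
        Real.log_div (ne_of_gt hK0) (ne_of_gt hJ0)
      have h4 : Real.log (J:ℝ) < T := by
        rw [hlogdiv, lt_div_iff₀ hN0] at h3
        have h5 : N*(R-δ)^2/(2*K) < Real.log K - Real.log (J:ℝ) := by
          rw [div_lt_iff₀ h2K]
          linarith
        rw [hTdef]
        linarith
      exact (Real.log_lt_iff_lt_exp hJ0).mp h4
    · rintro ⟨hJ1, hJlt⟩
      have hJ0 : (0:ℝ) < (J:ℝ) := by exact_mod_cast hJ1
      have hTK : T < Real.log K := by
        have hpos : 0 < N*(R-δ)^2/(2*K) := by positivity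
        rw [hTdef]; linarith
      have hexpTK : Real.exp T < K := by
        calc Real.exp T < Real.exp (Real.log K) := Real.exp_lt_exp.mpr hTK
          _ = K := Real.exp_log hK0
      have hJK : (J:ℝ) < K := lt_trans hJlt hexpTK
      have hJk : J ≤ k := by
        have : (J:ℝ) ≤ (k:ℝ) := hJK.le
        exact_mod_cast this
      refine ⟨hJ1, hJk, ?_⟩
      have h4 : Real.log (J:ℝ) < T := (Real.log_lt_iff_lt_exp hJ0).mpr hJlt
      have hlogdiv : Real.log (K/(J:ℝ)) = Real.log K - Real.log (J:ℝ) :=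
        Real.log_div (ne_of_gt hK0) (ne_of_gt hJ0)
      have h3 : (R - δ)^2 < 2*K*Real.log (K/(J:ℝ))/N := by
        rw [hlogdiv, lt_div_iff₀ hN0]
        have h5 : N*(R-δ)^2/(2*K) < Real.log K - Real.log (J:ℝ) := by
          rw [hTdef] at h4; linarith
        rw [div_lt_iff₀ h2K] at h5
        linarith
      have h2 : R - δ < Real.sqrt (2*K*Real.log (K/(J:ℝ))/N) := (Real.lt_sqrt hRδ'.le).mpr h3
      rw [hδdef, hRdef] at h2
      linarith
  -- expansion of T
  have hRsq : R^2 = 2*K*Real.log (P-K)/N := Real.sq_sqrt (by positivity)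
  have hNRK : N * R / K = Real.sqrt (2*N*Real.log (P-K)/K) := by
    have h1 : (N/K)^2 * (2*K*Real.log (P-K)/N) = 2*N*Real.log (P-K)/K := by
      field_simp
    rw [show N * R / K = (N/K) * R from by ring, hRdef,
      ← Real.sqrt_sq (by positivity : (0:ℝ) ≤ N/K), ← Real.sqrt_mul (by positivity) , h1]
  have hR2N : N * R^2 = 2*K*Real.log (P-K) := by
    rw [hRsq]; field_simp
  have hKinv : K * K⁻¹ = 1 := mul_inv_cancel₀ (ne_of_gt hK0)
  have hkey : N*(R-δ)^2/(2*K) = Real.log (P-K) - δ*(N*R/K) + δ^2*N/(2*K) := by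
    linear_combination hR2N / (2*K) + Real.log (P-K) * hKinv
  have hTexp : T = Real.log K - Real.log (P-K) + δ * Real.sqrt (2*N*Real.log (P-K)/K)
      - δ^2*N/(2*K) := by
    rw [hTdef, hkey, hNRK]; ring
  -- X expansion
  have hXdef : Xfun k n p c γ = δ * Real.sqrt (2*N*L/K) - δ^2*N/(2*K)
      + Real.log (N/(2*P*L)) := rfl
  have hXlog : Real.log (N/(2*P*L)) = Real.log N - Real.log (2*P*L) :=
    Real.log_div (ne_of_gt hN0) (by positivity)
  -- term bounds
  have b1 : |Real.log K - Real.log N| ≤ |Real.log c₄| + |Real.log c₅| + Real.log L := by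
    have lb : Real.log c₄ + Real.log N ≤ Real.log K := by
      rw [← Real.log_mul (ne_of_gt hc₄) (ne_of_gt hN0)]
      exact Real.log_le_log (by positivity) hkn1
    have ub : Real.log K ≤ Real.log c₅ + Real.log N + 0.99 * Real.log L := by
      have h1 : Real.log K ≤ Real.log (c₅ * N * L ^ (0.99:ℝ)) := Real.log_le_log hK0 hkn3
      rw [Real.log_mul (by positivity) (by positivity),
        Real.log_mul (ne_of_gt hc₅) (ne_of_gt hN0), Real.log_rpow hL0] at h1
      linarith
    have a4 := abs_nonneg (Real.log c₄)
    have a5 := abs_nonneg (Real.log c₅)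
    have l4 := neg_abs_le (Real.log c₄)
    have l5 := le_abs_self (Real.log c₅)
    rw [abs_le]
    constructor <;> linarith
  have b2 : |Real.log (2*P*L) - Real.log (P-K)| ≤ Real.log 2 + Real.log 100 + Real.log L := by
    have h1 : Real.log (2*P*L) = Real.log 2 + L + Real.log L := by
      rw [Real.log_mul (by positivity) (ne_of_gt hL0), Real.log_mul (by norm_num) (ne_of_gt hP0)]
    rw [abs_le]
    constructor <;> (rw [h1]; linarith)
  have b3 : |δ * (Real.sqrt (2*N*Real.log (P-K)/K) - Real.sqrt (2*N*L/K))| ≤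
      (3*c/2) * Real.sqrt (2*Real.log 100/c₄) := by
    set a : ℝ := 2*N*Real.log (P-K)/K with hadef
    set b : ℝ := 2*N*L/K with hbdef
    have hab : a ≤ b := by
      rw [hadef, hbdef]
      gcongr
    have h0a : 0 ≤ a := by
      rw [hadef]
      exact div_nonneg (mul_nonneg (by linarith) hlogPK_pos.le) hK0.le
    have hsub : Real.sqrt b - Real.sqrt a ≤ Real.sqrt (b - a) := by
      have := sqrt_le_sqrt_add_sqrt_sub h0a hab; linarith
    have hbma : b - a ≤ 2*Real.log 100/c₄ := by
      have e1 : b - a = (N/K) * (2*(L - Real.log (P-K))) := by rw [hadef, hbdef]; ring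
      have e2 : (N/K) * (2*(L - Real.log (P-K))) ≤ (1/c₄) * (2*Real.log 100) :=
        mul_le_mul hNK (by linarith) (by linarith) (by positivity)
      have e3 : (1/c₄) * (2*Real.log 100) = 2*Real.log 100/c₄ := by ring
      linarith
    have h6 : Real.sqrt (b-a) ≤ Real.sqrt (2*Real.log 100/c₄) := Real.sqrt_le_sqrt hbma
    have h7 : Real.sqrt a ≤ Real.sqrt b := Real.sqrt_le_sqrt hab
    rw [abs_of_nonpos (mul_nonpos_of_nonneg_of_nonpos hδ0.le (by linarith))]
    have h8 : δ * (Real.sqrt b - Real.sqrt a) ≤ (3*c/2) * Real.sqrt (2*Real.log 100/c₄) :=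
      mul_le_mul hδ32 (le_trans hsub h6) (by linarith) (by positivity)
    linarith
  set Cc : ℝ := Ccon c c₁ c₂ c₃ c₄ c₅ with hCcdef
  have hCcval : Cc = |Real.log c₄| + |Real.log c₅| + Real.log 2 + Real.log 100 +
      (3*c/2) * Real.sqrt (2*Real.log 100/c₄) + (3*c/2)^2/(2*c₄) +
      |Real.log c₁| + |Real.log c₃| + c₂ + 5 := hCcdef.trans rfl
  have t_nn : (0:ℝ) ≤ (3*c/2)*Real.sqrt (2*Real.log 100/c₄) := by positivity
  have t_nn2 : (0:ℝ) ≤ (3*c/2)^2/(2*c₄) := by positivity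
  have a1 := abs_nonneg (Real.log c₁)
  have a3 := abs_nonneg (Real.log c₃)
  have a4 := abs_nonneg (Real.log c₄)
  have a5 := abs_nonneg (Real.log c₅)
  have hCc5 : 5 ≤ Cc := by rw [hCcval]; linarith
  have hCc0 : (0:ℝ) ≤ Cc := by linarith
  have hCcE : Cc ≤ Cc*(1+Real.log L) := by
    have h := mul_nonneg hCc0 hLL0
    have e : Cc*(1+Real.log L) = Cc + Cc*Real.log L := by ring
    linarith
  have hCclogL : 2*Real.log L ≤ Cc*Real.log L :=
    mul_le_mul_of_nonneg_right (by linarith) hLL0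
  -- |T - X| bound
  have hid : T - Xfun k n p c γ = (Real.log K - Real.log N) +
      (Real.log (2*P*L) - Real.log (P-K)) +
      δ*(Real.sqrt (2*N*Real.log (P-K)/K) - Real.sqrt (2*N*L/K)) := by
    rw [hTexp, hXdef, hXlog]; ring
  have hTX : |T - Xfun k n p c γ| ≤ Cc*(1+Real.log L) := by
    have hsum : |T - Xfun k n p c γ| ≤
        (|Real.log c₄| + |Real.log c₅| + Real.log L) +
        (Real.log 2 + Real.log 100 + Real.log L) +
        (3*c/2) * Real.sqrt (2*Real.log 100/c₄) := by
      rw [hid]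
      exact le_trans (abs_add_three _ _ _) (by linarith [b1, b2, b3])
    have hconst : |Real.log c₄| + |Real.log c₅| + Real.log 2 + Real.log 100 +
        (3*c/2) * Real.sqrt (2*Real.log 100/c₄) ≤ Cc := by rw [hCcval]; linarith
    have e : Cc*(1+Real.log L) = Cc + Cc*Real.log L := by ring
    linarith
  -- |X - A| bound
  set A : ℝ := δ * Real.sqrt (2*N*L/K) with hAdef
  have hlog2PL : Real.log (2*P*L) = Real.log 2 + L + Real.log L := by
    rw [Real.log_mul (by positivity) (ne_of_gt hL0), Real.log_mul (by norm_num) (ne_of_gt hP0)]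
  have hid2 : Xfun k n p c γ - A = -(δ^2*N/(2*K)) + (Real.log N - Real.log (2*P*L)) := by
    rw [hXdef, hXlog]; ring
  have hδsq : δ^2 ≤ (3*c/2)^2 := pow_le_pow_left₀ hδ0.le hδ32 2
  have d1 : δ^2*N/(2*K) ≤ (3*c/2)^2/(2*c₄) := by
    have h1 : δ^2*(N/K) ≤ (3*c/2)^2*(1/c₄) :=
      mul_le_mul hδsq hNK (by positivity) (by positivity)
    have e1 : δ^2*N/(2*K) = δ^2*(N/K)/2 := by ring
    have e2 : (3*c/2)^2*(1/c₄)/2 = (3*c/2)^2/(2*c₄) := by ring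
    linarith
  have d1' : (0:ℝ) ≤ δ^2*N/(2*K) := by positivity
  have d2 : Real.log N ≤ Real.log c₃ + L := by
    have h1 : Real.log N ≤ Real.log (c₃ * P) := Real.log_le_log hN0 hnp2
    rw [Real.log_mul (ne_of_gt hc₃) (ne_of_gt hP0)] at h1
    exact h1
  have d3 : Real.log c₁ + L - c₂*Real.log L ≤ Real.log N := by
    have h1 : Real.log (c₁ * P / L ^ (c₂:ℝ)) ≤ Real.log N := Real.log_le_log (by positivity) hnp1
    rw [Real.log_div (by positivity) (by positivity),
      Real.log_mul (ne_of_gt hc₁) (ne_of_gt hP0), Real.log_rpow hL0] at h1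
    linarith
  have hlc1 := neg_abs_le (Real.log c₁)
  have hlc3 := le_abs_self (Real.log c₃)
  have hlc4 := neg_abs_le (Real.log c₄)
  have hlc5 := le_abs_self (Real.log c₅)
  have hXA : |Xfun k n p c γ - A| ≤ Cc*(1+Real.log L) := by
    have hc21 : (c₂+1)*Real.log L ≤ Cc*Real.log L := by
      apply mul_le_mul_of_nonneg_right ?_ hLL0
      rw [hCcval]; linarith
    have e : Cc*(1+Real.log L) = Cc + Cc*Real.log L := by ring
    rw [abs_le]
    constructor
    · rw [hid2, hlog2PL]
      have hconst2 : (3*c/2)^2/(2*c₄) + |Real.log c₁| + Real.log 2 ≤ Cc := by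
        rw [hCcval]; linarith
      linarith [d1, d3, hc21]
    · rw [hid2, hlog2PL]
      have : Real.log N - (Real.log 2 + L + Real.log L) ≤ |Real.log c₃| := by linarith
      linarith
  -- lower bound on A
  have r1 : L ^ (0.01:ℝ) = L / L ^ (0.99:ℝ) := by
    rw [eq_div_iff (ne_of_gt (Real.rpow_pos_of_pos hL0 _)), ← Real.rpow_add hL0]
    rw [show (0.01:ℝ) + 0.99 = 1 by norm_num, Real.rpow_one]
  have r2 : 1/(c₅ * L^(0.99:ℝ)) ≤ N/K := by
    rw [div_le_div_iff₀ (by positivity) hK0, one_mul]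
    calc K ≤ c₅*N*L^(0.99:ℝ) := hkn3
      _ = N*(c₅*L^(0.99:ℝ)) := by ring
  have key1 : (2/c₅)*L^(0.01:ℝ) ≤ 2*N*L/K := by
    have e1 : (2/c₅)*L^(0.01:ℝ) = 2*L*(1/(c₅*L^(0.99:ℝ))) := by
      rw [r1]; field_simp
    have e2 : 2*L*(1/(c₅*L^(0.99:ℝ))) ≤ 2*L*(N/K) :=
      mul_le_mul_of_nonneg_left r2 (by linarith)
    have e3 : 2*L*(N/K) = 2*N*L/K := by ring
    linarith
  have key2 : Real.sqrt ((2/c₅)*L^(0.01:ℝ)) = Real.sqrt (2/c₅) * L^(0.005:ℝ) := by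
    rw [Real.sqrt_mul (by positivity)]
    congr 1
    have h : L ^ (0.01:ℝ) = (L ^ (0.005:ℝ))^2 := by
      rw [← Real.rpow_natCast (L ^ (0.005:ℝ)) 2, ← Real.rpow_mul hL0.le]; norm_num
    rw [h, Real.sqrt_sq (by positivity)]
  have hA : c * Real.sqrt (2/c₅) * L^(0.005:ℝ) ≤ A := by
    rw [hAdef]
    have h1 : Real.sqrt ((2/c₅)*L^(0.01:ℝ)) ≤ Real.sqrt (2*N*L/K) := Real.sqrt_le_sqrt key1
    have h2 : c * Real.sqrt ((2/c₅)*L^(0.01:ℝ)) ≤ δ * Real.sqrt (2*N*L/K) :=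
      mul_le_mul hδc h1 (Real.sqrt_nonneg _) (le_of_lt hδ0)
    have e : c * Real.sqrt (2/c₅) * L^(0.005:ℝ) = c * Real.sqrt ((2/c₅)*L^(0.01:ℝ)) := by
      rw [key2]; ring
    linarith only [h2, e]
  -- assembling
  have hEA : Cc*(1+Real.log L) ≤ A/8 := le_trans hsm (by linarith only [hA])
  have hXAl := (abs_le.mp hXA).1
  have hXAu := (abs_le.mp hXA).2
  have hTXl := (abs_le.mp hTX).1
  have hTXu := (abs_le.mp hTX).2
  have hW : (8:ℝ) ≤ c * Real.sqrt (2/c₅) * L^(0.005:ℝ) := hbig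
  have hXpos : 0 < Xfun k n p c γ := by linarith only [hXAl, hEA, hA, hW]
  have hXge : c * Real.sqrt (2/c₅) * L^(0.005:ℝ)/2 ≤ Xfun k n p c γ := by
    linarith only [hXAl, hEA, hA, hW]
  have hT2 : Real.log 2 ≤ T := by linarith only [hTXl, hXAl, hEA, hA, hW, hl2_1]
  refine ⟨hXpos, hXge, ?_⟩
  -- now the floor argument
  have hexpT2 : (2:ℝ) ≤ Real.exp T := by
    rw [show (2:ℝ) = Real.exp (Real.log 2) from (Real.exp_log (by norm_num)).symm]
    exact Real.exp_le_exp.mpr hT2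
  set J₀ : ℕ := ⌈Real.exp T⌉₊ - 1 with hJ₀def
  have hceil2 : 2 ≤ ⌈Real.exp T⌉₊ := by
    have h1 : (1:ℝ) < Real.exp T := by linarith
    have h2 : 1 < ⌈Real.exp T⌉₊ := Nat.lt_ceil.mpr (by exact_mod_cast h1)
    omega
  have hJ₀cast : (J₀:ℝ) = (⌈Real.exp T⌉₊:ℝ) - 1 := by
    rw [hJ₀def, Nat.cast_sub (by omega)]; norm_num
  have hJ₀lt : (J₀:ℝ) < Real.exp T := by
    have := Nat.ceil_lt_add_one (le_of_lt (Real.exp_pos T))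
    rw [hJ₀cast]; linarith
  have hJ₀ge : Real.exp T - 1 ≤ (J₀:ℝ) := by
    have := Nat.le_ceil (Real.exp T)
    rw [hJ₀cast]; linarith
  have hJ₀mem : J₀ ∈ S := (hmem J₀).mpr ⟨by omega, hJ₀lt⟩
  have hbddS : BddAbove S := ⟨k, fun x hx => hx.2.1⟩
  have hsup_mem : sSup S ∈ S := Nat.sSup_mem ⟨J₀, hJ₀mem⟩ hbddS
  obtain ⟨hs1, hs2⟩ := (hmem _).mp hsup_mem
  have hsupge : (J₀:ℝ) ≤ ((sSup S : ℕ):ℝ) := Nat.cast_le.mpr (le_csSup hbddS hJ₀mem)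
  have hsup_pos : (0:ℝ) < ((sSup S : ℕ):ℝ) := by exact_mod_cast hs1
  have hup : Real.log ((sSup S : ℕ):ℝ) ≤ T := by
    have h1 := Real.log_lt_log hsup_pos hs2
    rw [Real.log_exp] at h1
    exact h1.le
  have hlow : T - Real.log 2 ≤ Real.log ((sSup S : ℕ):ℝ) := by
    have h1 : Real.exp T / 2 ≤ ((sSup S : ℕ):ℝ) := by
      linarith only [hJ₀ge, hsupge, hexpT2]
    have h2 : Real.log (Real.exp T / 2) ≤ Real.log ((sSup S : ℕ):ℝ) :=
      Real.log_le_log (by positivity) h1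
    rw [Real.log_div (Real.exp_ne_zero T) (by norm_num), Real.log_exp] at h2
    linarith
  rw [hJcdef]
  have htri : |Real.log ((sSup S : ℕ):ℝ) - Xfun k n p c γ| ≤
      |Real.log ((sSup S : ℕ):ℝ) - T| + |T - Xfun k n p c γ| := abs_sub_le _ _ _
  have hmid : |Real.log ((sSup S : ℕ):ℝ) - T| ≤ Real.log 2 :=
    abs_le.mpr ⟨by linarith, by linarith⟩
  have e : 2*Cc*(1+Real.log L) = Cc*(1+Real.log L) + Cc*(1+Real.log L) := by ring
  linarith only [htri, hmid, hTX, hCcE, hl2_1, e, hCc5]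

lemma Ic_le_Jc (k n p : ℕ) (c g : ℝ) (hg : g ≤ 0) : Ic k n p c g ≤ Jc k n p c g := by
  unfold Jc Ic
  have hsub : {I : ℕ | 1 ≤ I ∧ I ≤ k ∧
      Real.sqrt (2 * k * Real.log ((p : ℝ) - k) / n) - c <
        g + Real.sqrt (2 * k * Real.log ((k : ℝ) / I) / n)} ⊆
      {I : ℕ | 1 ≤ I ∧ I ≤ k ∧
      Real.sqrt (2 * k * Real.log ((p : ℝ) - k) / n) - c <
        -g + Real.sqrt (2 * k * Real.log ((k : ℝ) / I) / n)} := by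
    intro x hx
    exact ⟨hx.1, hx.2.1, lt_of_lt_of_le hx.2.2 (by linarith [hx.2.2])⟩
  rcases Set.eq_empty_or_nonempty {I : ℕ | 1 ≤ I ∧ I ≤ k ∧
      Real.sqrt (2 * k * Real.log ((p : ℝ) - k) / n) - c <
        g + Real.sqrt (2 * k * Real.log ((k : ℝ) / I) / n)} with h | h
  · rw [h, csSup_empty]
    exact bot_le
  · exact csSup_le_csSup ⟨k, fun x hx => hx.2.1⟩ h hsub

lemma aux_tendsto (a b : ℝ) (hb : 0 < b) :
    Tendsto (fun x : ℝ => a * (1 + Real.log x) / (b * x ^ (0.005:ℝ))) atTop (𝓝 0) := by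
  have t1 : Tendsto (fun x : ℝ => Real.log x / x ^ (0.005:ℝ)) atTop (𝓝 0) :=
    (isLittleO_log_rpow_atTop (by norm_num)).tendsto_div_nhds_zero
  have t2 : Tendsto (fun x : ℝ => 1 / x ^ (0.005:ℝ)) atTop (𝓝 0) := by
    refine (tendsto_rpow_neg_atTop (by norm_num : (0:ℝ) < 0.005)).congr' ?_
    filter_upwards [eventually_gt_atTop (0:ℝ)] with x hx
    rw [Real.rpow_neg hx.le, one_div]
  have t3 : Tendsto (fun x : ℝ => (a / b) * (1 / x ^ (0.005:ℝ)) +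
      (a / b) * (Real.log x / x ^ (0.005:ℝ))) atTop (𝓝 0) := by
    have := (t2.const_mul (a / b)).add (t1.const_mul (a / b))
    simpa using this
  refine t3.congr' ?_
  filter_upwards [eventually_gt_atTop (0:ℝ)] with x hx
  have hxp : x ^ (0.005:ℝ) ≠ 0 := ne_of_gt (Real.rpow_pos_of_pos hx _)
  field_simp

set_option maxHeartbeats 2000000 in
theorem Jc_asymptotics
    (k n p : ℕ → ℕ)
    (hk : Tendsto k atTop atTop) (hn : Tendsto n atTop atTop) (hp : Tendsto p atTop atTop)
    (c₁ c₂ c₃ c₄ c₅ : ℝ)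
    (hc₁ : 0 < c₁) (hc₂ : 0 < c₂) (hc₃ : 0 < c₃) (hc₄ : 0 < c₄) (hc₅ : 0 < c₅)
    (hnp : ∀ l, c₁ * p l / (Real.log (p l)) ^ c₂ ≤ (n l : ℝ) ∧ (n l : ℝ) ≤ c₃ * p l)
    (hkn : ∀ l, c₄ * n l ≤ (k l : ℝ) ∧
        (k l : ℝ) ≤ min ((0.99 : ℝ) * p l) (c₅ * n l * (Real.log (p l)) ^ (0.99 : ℝ)))
    (c : ℝ) (hc : 0 < c)
    (γ : ℕ → ℝ) (hγ : ∀ l, -c / 2 < γ l ∧ γ l ≤ 0) :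
    (∀ᶠ l in atTop, Ic (k l) (n l) (p l) c (γ l) ≤ Jc (k l) (n l) (p l) c (γ l)) ∧
    ∃ e : ℕ → ℝ, Tendsto e atTop (𝓝 0) ∧
      ∀ᶠ l in atTop, Real.log (Jc (k l) (n l) (p l) c (γ l)) =
        (1 + e l) * ((c - γ l) * Real.sqrt (2 * n l * Real.log (p l) / k l)
          - (c - γ l) ^ 2 * n l / (2 * k l) + Real.log (n l / (2 * p l * Real.log (p l)))) := by
  constructor
  · exact Eventually.of_forall fun l => Ic_le_Jc _ _ _ _ _ (hγ l).2
  set D : ℝ := c * Real.sqrt (2/c₅) with hDdef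
  have hD : 0 < D := by rw [hDdef]; positivity
  set Cc : ℝ := Ccon c c₁ c₂ c₃ c₄ c₅ with hCcdef
  have hpr : Tendsto (fun l => ((p l : ℕ) : ℝ)) atTop atTop :=
    tendsto_natCast_atTop_atTop.comp hp
  have hLr : Tendsto (fun l => Real.log (p l)) atTop atTop := Real.tendsto_log_atTop.comp hpr
  have hWt : Tendsto (fun l => D * (Real.log (p l)) ^ (0.005:ℝ)) atTop atTop := by
    have h1 : Tendsto (fun x : ℝ => D * x ^ (0.005:ℝ)) atTop atTop :=
      (tendsto_rpow_atTop (by norm_num)).const_mul_atTop hD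
    exact h1.comp hLr
  have hbig : ∀ᶠ l in atTop, 8 ≤ D * (Real.log (p l)) ^ (0.005:ℝ) :=
    hWt.eventually_ge_atTop 8
  have hr1 : Tendsto (fun l => Cc * (1 + Real.log (Real.log (p l))) /
      (D * (Real.log (p l)) ^ (0.005:ℝ))) atTop (𝓝 0) := (aux_tendsto Cc D hD).comp hLr
  have hsm : ∀ᶠ l in atTop, Cc * (1 + Real.log (Real.log (p l))) ≤
      D * (Real.log (p l)) ^ (0.005:ℝ) / 8 := by
    filter_upwards [hr1.eventually_lt_const (by norm_num : (0:ℝ) < 1/8), hbig] with l h1 h2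
    have hW0 : 0 < D * (Real.log (p l)) ^ (0.005:ℝ) := by linarith
    rw [div_lt_iff₀ hW0] at h1
    linarith
  have hM : ∀ᶠ l in atTop, 2*Real.log 100 + 9*c^2/(4*c₄) + 3 ≤ Real.log (p l) :=
    hLr.eventually_ge_atTop _
  have hn1 : ∀ᶠ l in atTop, (1:ℝ) ≤ (n l : ℝ) := by
    filter_upwards [hn.eventually_ge_atTop 1] with l h
    exact_mod_cast h
  have hk1 : ∀ᶠ l in atTop, (1:ℝ) ≤ (k l : ℝ) := by
    filter_upwards [hk.eventually_ge_atTop 1] with l h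
    exact_mod_cast h
  -- pointwise conclusions
  have hpt : ∀ᶠ l in atTop,
      0 < Xfun (k l) (n l) (p l) c (γ l) ∧
      D * (Real.log (p l)) ^ (0.005:ℝ) / 2 ≤ Xfun (k l) (n l) (p l) c (γ l) ∧
      |Real.log (Jc (k l) (n l) (p l) c (γ l)) - Xfun (k l) (n l) (p l) c (γ l)| ≤
        2 * Cc * (1 + Real.log (Real.log (p l))) := by
    filter_upwards [hsm, hbig, hM, hn1, hk1] with l h1 h2 h3 h4 h5
    have hminsplit := le_min_iff.mp (hkn l).2
    exact pointwise c c₁ c₂ c₃ c₄ c₅ hc hc₁ hc₂ hc₃ hc₄ hc₅ (k l) (n l) (p l) (γ l)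
      (hγ l).1 (hγ l).2 h4 h5 (hnp l).1 (hnp l).2 (hkn l).1 hminsplit.1 hminsplit.2 h3 h1 h2
  refine ⟨fun l => Real.log (Jc (k l) (n l) (p l) c (γ l)) /
      Xfun (k l) (n l) (p l) c (γ l) - 1, ?_, ?_⟩
  · -- tendsto 0
    rw [tendsto_zero_iff_abs_tendsto_zero]
    have hq : Tendsto (fun l => (4*Cc) * (1 + Real.log (Real.log (p l))) /
        (D * (Real.log (p l)) ^ (0.005:ℝ))) atTop (𝓝 0) := (aux_tendsto (4*Cc) D hD).comp hLr
    refine squeeze_zero' (Eventually.of_forall fun l => abs_nonneg _) ?_ hq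
    filter_upwards [hpt, hbig] with l hl hWl
    obtain ⟨hX0, hXge, hbd⟩ := hl
    have hXne : Xfun (k l) (n l) (p l) c (γ l) ≠ 0 := ne_of_gt hX0
    have he : Real.log (Jc (k l) (n l) (p l) c (γ l)) / Xfun (k l) (n l) (p l) c (γ l) - 1 =
        (Real.log (Jc (k l) (n l) (p l) c (γ l)) - Xfun (k l) (n l) (p l) c (γ l)) /
          Xfun (k l) (n l) (p l) c (γ l) := by
      field_simp
    show |Real.log (Jc (k l) (n l) (p l) c (γ l)) / Xfun (k l) (n l) (p l) c (γ l) - 1| ≤ _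
    rw [he, abs_div, abs_of_pos hX0]
    have h2Cc : (0:ℝ) ≤ 2 * Cc * (1 + Real.log (Real.log (p l))) :=
      le_trans (abs_nonneg _) hbd
    have hW0 : (0:ℝ) < D * (Real.log (p l)) ^ (0.005:ℝ) := by linarith
    calc |Real.log (Jc (k l) (n l) (p l) c (γ l)) - Xfun (k l) (n l) (p l) c (γ l)| /
          Xfun (k l) (n l) (p l) c (γ l)
        ≤ (2 * Cc * (1 + Real.log (Real.log (p l)))) /
          (D * (Real.log (p l)) ^ (0.005:ℝ) / 2) :=
          div_le_div₀ h2Cc hbd (by linarith) hXge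
      _ = (4*Cc) * (1 + Real.log (Real.log (p l))) / (D * (Real.log (p l)) ^ (0.005:ℝ)) := by
          rw [div_div_eq_mul_div]; ring
  · -- eventual equality
    filter_upwards [hpt] with l hl
    obtain ⟨hX0, _, _⟩ := hl
    show Real.log (Jc (k l) (n l) (p l) c (γ l)) =
      (1 + (Real.log (Jc (k l) (n l) (p l) c (γ l)) / Xfun (k l) (n l) (p l) c (γ l) - 1)) *
        Xfun (k l) (n l) (p l) c (γ l)
    field_simp
    ring
end

section
/- Let c > 0 and c' > 0 be constants and let γ = γ_l be any sequence with 0 < γ_l ≤ 1.01 for all l, and assume √(2 k log(p−k)/n) > c + γ + c' for all large l. Then I_c(γ) ≥ J_c(γ) for all large l, and log I_c(γ) = (1 + o(1))·[(c + γ)·√(2 n log p / k) − (c + γ)²·n/(2k) + log(n/(2 p log p))] as l → ∞. -/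
open Filter Topology

lemma Ic_eq_aux (k n p : ℕ) (c γ : ℝ) (hk : 1 ≤ k) (hn : 1 ≤ n)
    (hr : 0 < Real.sqrt (2 * k * Real.log ((p:ℝ) - k) / n) - c - γ)
    (hx : 2 < (k:ℝ) * Real.exp (-((n:ℝ) *
      (Real.sqrt (2 * k * Real.log ((p:ℝ) - k) / n) - c - γ)^2 / (2*k)))) :
    Ic k n p c γ =
    ⌈(k:ℝ) * Real.exp (-((n:ℝ) *
      (Real.sqrt (2 * k * Real.log ((p:ℝ) - k) / n) - c - γ)^2 / (2*k)))⌉₊ - 1 := by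
  unfold Ic
  set r : ℝ := Real.sqrt (2 * k * Real.log ((p:ℝ) - k) / n) - c - γ with hrdef
  set T : ℝ := (n:ℝ) * r^2 / (2*k) with hTdef
  set x : ℝ := (k:ℝ) * Real.exp (-T) with hxdef
  have hk0 : (0:ℝ) < k := by exact_mod_cast hk
  have hn0 : (0:ℝ) < n := by exact_mod_cast hn
  have hT0 : 0 < T := by positivity
  have hxk : x < k := by
    have : Real.exp (-T) < 1 := Real.exp_lt_one_iff.2 (by linarith)
    calc x < (k:ℝ) * 1 := by
            rw [hxdef]; exact mul_lt_mul_of_pos_left this hk0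
      _ = k := mul_one _
  have hset : {I : ℕ | 1 ≤ I ∧ I ≤ k ∧
      Real.sqrt (2 * k * Real.log ((p : ℝ) - k) / n) - c <
        γ + Real.sqrt (2 * k * Real.log ((k : ℝ) / I) / n)} =
      Set.Icc 1 (⌈x⌉₊ - 1) := by
    ext I
    simp only [Set.mem_setOf_eq, Set.mem_Icc]
    constructor
    · rintro ⟨h1, h2, h3⟩
      refine ⟨h1, ?_⟩
      have hI0 : (0:ℝ) < I := by exact_mod_cast h1
      have hkI1 : (1:ℝ) ≤ (k:ℝ)/I := by
        rw [le_div_iff₀ hI0, one_mul]; exact_mod_cast h2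
      have hlog : r^2 < 2 * k * Real.log ((k : ℝ) / I) / n := by
        rw [← Real.lt_sqrt hr.le]; linarith
      have hT : T < Real.log ((k:ℝ)/I) := by
        rw [hTdef, div_lt_iff₀ (by positivity)]
        calc (n:ℝ) * r^2 = (2 * k * Real.log ((k : ℝ) / I) / n) * n
              - (2 * k * Real.log ((k : ℝ) / I) / n - r^2) * n := by ring
          _ < (2 * k * Real.log ((k : ℝ) / I) / n) * n := by
              have := mul_pos (by linarith : (0:ℝ) < 2 * k * Real.log ((k : ℝ) / I) / n - r^2) hn0
              linarith
          _ = Real.log ((k:ℝ)/I) * (2*k) := by field_simp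
      have : Real.exp T < (k:ℝ)/I := by
        calc Real.exp T < Real.exp (Real.log ((k:ℝ)/I)) := Real.exp_lt_exp.2 hT
          _ = (k:ℝ)/I := Real.exp_log (by positivity)
      have hIx : (I:ℝ) < x := by
        rw [hxdef, Real.exp_neg, ← div_eq_mul_inv, lt_div_iff₀ (Real.exp_pos T)]
        rw [lt_div_iff₀ hI0] at this
        linarith
      have : I < ⌈x⌉₊ := Nat.lt_ceil.2 hIx
      omega
    · rintro ⟨h1, h2⟩
      have hce : 2 < ⌈x⌉₊ := by
        have := Nat.lt_ceil (n := 2) (a := x)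
        exact this.2 (by exact_mod_cast hx)
      have hI : I < ⌈x⌉₊ := by omega
      have hIx : (I:ℝ) < x := Nat.lt_ceil.1 hI
      have h2' : I ≤ k := by
        have h : (I:ℝ) < k := lt_trans hIx hxk
        exact_mod_cast h.le
      refine ⟨h1, h2', ?_⟩
      have hI0 : (0:ℝ) < I := by exact_mod_cast h1
      -- reverse chain
      have hT : T < Real.log ((k:ℝ)/I) := by
        have hexp : Real.exp T < (k:ℝ)/I := by
          rw [hxdef, Real.exp_neg, ← div_eq_mul_inv, lt_div_iff₀ (Real.exp_pos T)] at hIx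
          rw [lt_div_iff₀ hI0]
          linarith
        calc T = Real.log (Real.exp T) := (Real.log_exp T).symm
          _ < Real.log ((k:ℝ)/I) := Real.log_lt_log (Real.exp_pos T) hexp
      have hlog : r^2 < 2 * k * Real.log ((k : ℝ) / I) / n := by
        rw [hTdef, div_lt_iff₀ (by positivity)] at hT
        rw [lt_div_iff₀ hn0]
        nlinarith
      have : r < Real.sqrt (2 * k * Real.log ((k : ℝ) / I) / n) :=
        (Real.lt_sqrt hr.le).2 hlog
      linarith
  rw [hset, csSup_Icc]
  have hce : 2 < ⌈x⌉₊ := by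
    have := Nat.lt_ceil (n := 2) (a := x)
    exact this.2 (by exact_mod_cast hx)
  omega

noncomputable def Dc (c c₄ c₅ : ℝ) : ℝ :=
  |Real.log c₄| + |Real.log c₅| + 6 + 3*(c+1.01)*Real.sqrt (2/c₄) + 3
noncomputable def C7c (c c₅ : ℝ) : ℝ := c * Real.sqrt (2/c₅)
noncomputable def C8c (c c₁ c₂ c₄ : ℝ) : ℝ :=
  (c+1.01)^2/(2*c₄) + |Real.log (c₁/2)| + (c₂+1)

lemma sqrt_add_le' (a b : ℝ) (ha : 0 ≤ a) (hb : 0 ≤ b) :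
    Real.sqrt (a+b) ≤ Real.sqrt a + Real.sqrt b := by
  have h := Real.sqrt_le_sqrt (show a + b ≤ (Real.sqrt a + Real.sqrt b)^2 by
    nlinarith [Real.sq_sqrt ha, Real.sq_sqrt hb, Real.sqrt_nonneg a, Real.sqrt_nonneg b])
  rwa [Real.sqrt_sq (by positivity)] at h

lemma log_two_le : Real.log 2 ≤ 1 := by
  rw [← Real.log_exp 1]
  apply Real.log_le_log two_pos
  nlinarith [Real.exp_one_gt_d9]

lemma log_hundred_le : Real.log 100 ≤ 5 := by
  rw [← Real.log_exp 5]
  apply Real.log_le_log (by norm_num)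
  have h : Real.exp 5 = (Real.exp 1)^5 := by
    rw [← Real.exp_nat_mul]; norm_num
  have h2 : (2.7:ℝ)^5 ≤ (Real.exp 1)^5 :=
    pow_le_pow_left₀ (by norm_num) (by nlinarith [Real.exp_one_gt_d9]) 5
  nlinarith

set_option maxHeartbeats 4000000 in
lemma main_bounds (k n p : ℕ) (c c' g c₁ c₂ c₄ c₅ : ℝ)
    (hc : 0 < c) (hc' : 0 < c') (hg0 : 0 < g) (hg1 : g ≤ 1.01)
    (hc₁ : 0 < c₁) (hc₂ : 0 < c₂) (hc₄ : 0 < c₄) (hc₅ : 0 < c₅)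
    (hk1 : 1 ≤ k) (hn1 : 1 ≤ n) (hp300 : (300:ℝ) ≤ p)
    (hnp1 : c₁ * p / (Real.log p) ^ c₂ ≤ (n:ℝ))
    (hkn1 : c₄ * n ≤ (k:ℝ)) (hkp : (k:ℝ) ≤ 0.99 * p)
    (hkn2 : (k:ℝ) ≤ c₅ * n * (Real.log p) ^ (0.99:ℝ))
    (hsep : c + g + c' < Real.sqrt (2 * k * Real.log ((p:ℝ) - k) / n))
    (hE5 : (Dc c c₄ c₅ + C8c c c₁ c₂ c₄) * (1 + Real.log (Real.log p)) + 2
        ≤ C7c c c₅ / 2 * (Real.log p) ^ (0.005:ℝ)) :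
    |Real.log (Ic k n p c g) -
        ((c + g) * Real.sqrt (2 * n * Real.log p / k) - (c + g) ^ 2 * n / (2 * k)
          + Real.log ((n:ℝ) / (2 * p * Real.log p)))|
        ≤ Dc c c₄ c₅ * (1 + Real.log (Real.log p)) ∧
    C7c c c₅ / 2 * (Real.log p) ^ (0.005:ℝ) + 2 + Dc c c₄ c₅ * (1 + Real.log (Real.log p))
      ≤ (c + g) * Real.sqrt (2 * n * Real.log p / k) - (c + g) ^ 2 * n / (2 * k)
          + Real.log ((n:ℝ) / (2 * p * Real.log p)) := by
  have hP0 : (0:ℝ) < p := by linarith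
  have hK0 : (0:ℝ) < k := by exact_mod_cast hk1
  have hN0 : (0:ℝ) < n := by exact_mod_cast hn1
  have hLP1 : 1 ≤ Real.log p := by
    rw [← Real.log_exp 1]
    apply Real.log_le_log (Real.exp_pos 1)
    nlinarith [Real.exp_one_lt_d9]
  have hLP0 : (0:ℝ) < Real.log p := by linarith
  have hLL0 : 0 ≤ Real.log (Real.log p) := Real.log_nonneg hLP1
  have hPK : 0.01 * (p:ℝ) ≤ (p:ℝ) - k := by linarith
  have hPK3 : (3:ℝ) ≤ (p:ℝ) - k := by linarith
  have hL'0 : 0 ≤ Real.log ((p:ℝ) - k) := Real.log_nonneg (by linarith)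
  have hL'LP : Real.log ((p:ℝ) - k) ≤ Real.log p :=
    Real.log_le_log (by linarith) (by linarith)
  have hLPL' : Real.log p ≤ Real.log 100 + Real.log ((p:ℝ) - k) := by
    have h1 : (p:ℝ) ≤ 100 * ((p:ℝ) - k) := by linarith
    calc Real.log p ≤ Real.log (100 * ((p:ℝ) - k)) := Real.log_le_log hP0 h1
      _ = Real.log 100 + Real.log ((p:ℝ) - k) := Real.log_mul (by norm_num) (by linarith)
  set A := Real.sqrt (2 * k * Real.log ((p:ℝ) - k) / n) with hA
  have hr : 0 < A - c - g := by linarith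
  have hb0 : 0 < c + g := by linarith
  have hb1 : c + g ≤ c + 1.01 := by linarith
  set T := (n:ℝ) * (A - c - g)^2 / (2*k) with hT
  set x := (k:ℝ) * Real.exp (-T) with hx
  have hA2 : A^2 = 2*k*Real.log ((p:ℝ)-k)/n := Real.sq_sqrt (by positivity)
  have hNA : Real.sqrt (2*n*Real.log ((p:ℝ)-k)/k) = ((n:ℝ)/k) * A := by
    rw [show 2*(n:ℝ)*Real.log ((p:ℝ)-k)/k
        = ((n:ℝ)/k)^2 * (2*k*Real.log ((p:ℝ)-k)/n) by field_simp]
    rw [Real.sqrt_mul (sq_nonneg _), Real.sqrt_sq (by positivity)]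
  have hlogx : Real.log x = Real.log k - Real.log ((p:ℝ)-k)
      + (c+g) * Real.sqrt (2*n*Real.log ((p:ℝ)-k)/k) - (c+g)^2*n/(2*k) := by
    rw [hx, Real.log_mul (ne_of_gt hK0) (Real.exp_ne_zero _), Real.log_exp, hNA]
    have h1 : (n:ℝ)*A^2/(2*k) = Real.log ((p:ℝ)-k) := by rw [hA2]; field_simp
    have h2 : T = (n:ℝ)*A^2/(2*k) - (c+g)*(((n:ℝ)/k)*A) + (c+g)^2*(n:ℝ)/(2*k) := by
      rw [hT]; field_simp; ring
    rw [h2, h1]; ring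
  -- T1 bounds
  have hT1u : Real.log k - Real.log n ≤ |Real.log c₅| + Real.log (Real.log p) := by
    have h : Real.log k ≤ Real.log c₅ + Real.log n + 0.99 * Real.log (Real.log p) := by
      have h := Real.log_le_log hK0 hkn2
      rwa [Real.log_mul (by positivity) (by positivity),
        Real.log_mul (by positivity) (by positivity), Real.log_rpow hLP0] at h
    linarith [le_abs_self (Real.log c₅)]
  have hT1l : Real.log c₄ + Real.log n ≤ Real.log k := by
    have h := Real.log_le_log (by positivity : (0:ℝ) < c₄ * n) hkn1
    rwa [Real.log_mul (by positivity) (by positivity)] at h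
  -- log split of R's log-term
  have hRsplit : Real.log ((n:ℝ)/(2*p*Real.log p))
      = Real.log n - (Real.log 2 + Real.log p + Real.log (Real.log p)) := by
    rw [Real.log_div (by positivity) (by positivity),
      Real.log_mul (by positivity) (by positivity),
      Real.log_mul (by norm_num) (by positivity)]
  -- T3 bound
  have hsqrt_mono : Real.sqrt (2*n*Real.log ((p:ℝ)-k)/k) ≤ Real.sqrt (2*n*Real.log p/k) := by
    apply Real.sqrt_le_sqrt
    gcongr
  have hT3 : Real.sqrt (2*n*Real.log p/k) - Real.sqrt (2*n*Real.log ((p:ℝ)-k)/k)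
      ≤ 3 * Real.sqrt (2/c₄) := by
    have hNK : (n:ℝ)/k ≤ 1/c₄ := by
      rw [div_le_div_iff₀ hK0 hc₄, one_mul, mul_comm]; exact hkn1
    have h1 : 2*(n:ℝ)*Real.log p/k ≤ 2*n*Real.log ((p:ℝ)-k)/k + 10/c₄ := by
      have h2 : 2*(n:ℝ)*Real.log p/k - 2*n*Real.log ((p:ℝ)-k)/k
          = (Real.log p - Real.log ((p:ℝ)-k)) * (2*(n/k)) := by ring
      have h3 : Real.log p - Real.log ((p:ℝ)-k) ≤ 5 := by
        linarith [log_hundred_le]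
      have hNK2 : 2*((n:ℝ)/k) ≤ 2/c₄ := by
        calc 2*((n:ℝ)/k) ≤ 2*(1/c₄) := by linarith
          _ = 2/c₄ := by ring
      have h4 : (Real.log p - Real.log ((p:ℝ)-k)) * (2*((n:ℝ)/k)) ≤ 5 * (2/c₄) :=
        mul_le_mul h3 hNK2 (by positivity) (by norm_num)
      have h5 : 5*((2:ℝ)/c₄) = 10/c₄ := by ring
      linarith
    have hbig : Real.sqrt (2*n*Real.log p/k)
        ≤ Real.sqrt (2*n*Real.log ((p:ℝ)-k)/k) + 3 * Real.sqrt (2/c₄) := by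
      calc Real.sqrt (2*n*Real.log p/k)
          ≤ Real.sqrt (2*n*Real.log ((p:ℝ)-k)/k + 10/c₄) := Real.sqrt_le_sqrt h1
        _ ≤ Real.sqrt (2*n*Real.log ((p:ℝ)-k)/k) + Real.sqrt (10/c₄) :=
            sqrt_add_le' _ _ (by positivity) (by positivity)
        _ ≤ Real.sqrt (2*n*Real.log ((p:ℝ)-k)/k) + 3 * Real.sqrt (2/c₄) := by
            have he : Real.sqrt (10/c₄) = Real.sqrt 5 * Real.sqrt (2/c₄) := by
              rw [show (10:ℝ)/c₄ = 5*(2/c₄) by ring, Real.sqrt_mul (by norm_num)]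
            rw [he]
            have h5 : Real.sqrt 5 ≤ 3 := by
              rw [show (3:ℝ) = Real.sqrt 9 by
                rw [show (9:ℝ) = 3^2 by norm_num, Real.sqrt_sq (by norm_num)]]
              exact Real.sqrt_le_sqrt (by norm_num)
            have h6 := mul_le_mul_of_nonneg_right h5 (Real.sqrt_nonneg (2/c₄))
            linarith only [h6]
    linarith
  -- distance between log x and R
  have hlog2_0 : 0 ≤ Real.log 2 := Real.log_nonneg one_le_two
  have hlog100_0 : 0 ≤ Real.log 100 := Real.log_nonneg (by norm_num)
  have hbT3u : (c+g) * (Real.sqrt (2*n*Real.log p/k) - Real.sqrt (2*n*Real.log ((p:ℝ)-k)/k))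
      ≤ (c+1.01) * (3*Real.sqrt (2/c₄)) :=
    mul_le_mul hb1 hT3 (by linarith) (by linarith)
  have hbT3l : 0 ≤ (c+g) * (Real.sqrt (2*n*Real.log p/k)
      - Real.sqrt (2*n*Real.log ((p:ℝ)-k)/k)) :=
    mul_nonneg hb0.le (by linarith)
  have hbring : (c+1.01) * (3*Real.sqrt (2/c₄)) = 3*(c+1.01)*Real.sqrt (2/c₄) := by ring
  have hsq24 : 0 ≤ 3*(c+1.01)*Real.sqrt (2/c₄) := by positivity
  have hmain_dist : |Real.log x - ((c + g) * Real.sqrt (2 * n * Real.log p / k)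
      - (c + g) ^ 2 * n / (2 * k) + Real.log ((n:ℝ) / (2 * p * Real.log p)))|
      ≤ (Dc c c₄ c₅ - 3) + 2*Real.log (Real.log p) := by
    rw [hlogx, hRsplit, abs_le]
    have hDc : Dc c c₄ c₅ = |Real.log c₄| + |Real.log c₅| + 6
        + 3*(c+1.01)*Real.sqrt (2/c₄) + 3 := rfl
    rw [hDc]
    constructor <;>
      linarith only [hT1u, hT1l, hL'LP, hLPL', hbT3u, hbT3l, hbring, hsq24, hLL0,
        hlog2_0, hlog100_0, log_two_le, log_hundred_le,
        le_abs_self (Real.log c₄), neg_abs_le (Real.log c₄),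
        le_abs_self (Real.log c₅), neg_abs_le (Real.log c₅)]
  -- lower bound for the main term
  have hNK : (n:ℝ)/k ≤ 1/c₄ := by
    rw [div_le_div_iff₀ hK0 hc₄, one_mul, mul_comm]; exact hkn1
  have hNK5 : (2:ℝ)/c₅ * (Real.log p)^(0.01:ℝ) ≤ 2*n*Real.log p/k := by
    rw [le_div_iff₀ hK0]
    calc (2:ℝ)/c₅ * (Real.log p)^(0.01:ℝ) * k
        ≤ (2:ℝ)/c₅ * (Real.log p)^(0.01:ℝ) * (c₅ * n * (Real.log p)^(0.99:ℝ)) := by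
          gcongr
      _ = 2*n*((Real.log p)^(0.99:ℝ)*(Real.log p)^(0.01:ℝ)) := by field_simp
      _ = 2*n*Real.log p := by
          rw [← Real.rpow_add hLP0, show (0.99:ℝ)+(0.01:ℝ)=1 by norm_num, Real.rpow_one]
  have hsq : Real.sqrt ((2:ℝ)/c₅ * (Real.log p)^(0.01:ℝ))
      = Real.sqrt (2/c₅) * (Real.log p)^(0.005:ℝ) := by
    rw [Real.sqrt_mul (by positivity), Real.sqrt_eq_rpow ((Real.log p)^(0.01:ℝ)),
      ← Real.rpow_mul hLP0.le, show (0.01:ℝ)*(1/2) = 0.005 by norm_num]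
  have hC7G : C7c c c₅ * (Real.log p)^(0.005:ℝ)
      ≤ (c+g) * Real.sqrt (2*n*Real.log p/k) := by
    have h1 : Real.sqrt ((2:ℝ)/c₅ * (Real.log p)^(0.01:ℝ))
        ≤ Real.sqrt (2*n*Real.log p/k) := Real.sqrt_le_sqrt hNK5
    rw [hsq] at h1
    calc C7c c c₅ * (Real.log p)^(0.005:ℝ)
        = c * (Real.sqrt (2/c₅) * (Real.log p)^(0.005:ℝ)) := by
          simp only [C7c]; ring
      _ ≤ (c+g) * Real.sqrt (2*n*Real.log p/k) :=
          mul_le_mul (by linarith) h1 (by positivity) (by linarith)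
  have hb2 : (c+g)^2 ≤ (c+1.01)^2 := by
    have := pow_le_pow_left₀ hb0.le hb1 2
    simpa using this
  have hneg1 : (c+g)^2*n/(2*k) ≤ (c+1.01)^2/(2*c₄) := by
    have h1 : (c+g)^2*((n:ℝ)/k) ≤ (c+1.01)^2*(1/c₄) :=
      mul_le_mul hb2 hNK (by positivity) (by positivity)
    have h2 : (c+g)^2*(n:ℝ)/(2*k) = (c+g)^2*((n:ℝ)/k)/2 := by ring
    have h3 : (c+1.01)^2/(2*c₄) = (c+1.01)^2*(1/c₄)/2 := by ring
    linarith
  have hneg2 : Real.log (c₁/2) - (c₂+1)*Real.log (Real.log p)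
      ≤ Real.log ((n:ℝ)/(2*p*Real.log p)) := by
    have h1 : c₁/(2*(Real.log p)^(c₂+1)) ≤ (n:ℝ)/(2*p*Real.log p) := by
      rw [div_le_div_iff₀ (by positivity) (by positivity)]
      have hsplit : (Real.log p)^(c₂+1) = (Real.log p)^c₂ * Real.log p := by
        rw [Real.rpow_add hLP0, Real.rpow_one]
      rw [hsplit]
      have h0 := (div_le_iff₀ (by positivity : (0:ℝ) < (Real.log p)^c₂)).1 hnp1
      calc c₁ * (2*(p:ℝ)*Real.log p) = (c₁*p)*(2*Real.log p) := by ring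
        _ ≤ ((n:ℝ)*(Real.log p)^c₂)*(2*Real.log p) :=
            mul_le_mul_of_nonneg_right h0 (by positivity)
        _ = (n:ℝ) * (2*((Real.log p)^c₂ * Real.log p)) := by ring
    have h2 := Real.log_le_log (by positivity) h1
    rw [Real.log_div (by positivity) (by positivity),
      Real.log_mul (by norm_num) (by positivity), Real.log_rpow hLP0] at h2
    rw [Real.log_div (by positivity) (by norm_num)]
    linarith
  -- R lower bound
  have hDc9 : 9 ≤ Dc c c₄ c₅ := by
    have h1 : 0 ≤ |Real.log c₄| := abs_nonneg _
    have h2 : 0 ≤ |Real.log c₅| := abs_nonneg _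
    simp only [Dc]; linarith
  have hG0 : (0:ℝ) < (Real.log p)^(0.005:ℝ) := Real.rpow_pos_of_pos hLP0 _
  have hC70 : 0 ≤ C7c c c₅ := by simp only [C7c]; positivity
  have hC8exp : C8c c c₁ c₂ c₄ * (1 + Real.log (Real.log p))
      = (c+1.01)^2/(2*c₄) + |Real.log (c₁/2)| + (c₂+1)
        + C8c c c₁ c₂ c₄ * Real.log (Real.log p) := by
    simp only [C8c]; ring
  have hC8LL : (c₂+1)*Real.log (Real.log p) ≤ C8c c c₁ c₂ c₄ * Real.log (Real.log p) := by
    apply mul_le_mul_of_nonneg_right _ hLL0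
    have h1 : 0 ≤ (c+1.01)^2/(2*c₄) := by positivity
    have h2 : 0 ≤ |Real.log (c₁/2)| := abs_nonneg _
    simp only [C8c]; linarith
  have hE5' : Dc c c₄ c₅ * (1 + Real.log (Real.log p))
      + C8c c c₁ c₂ c₄ * (1 + Real.log (Real.log p)) + 2
      ≤ C7c c c₅ / 2 * (Real.log p)^(0.005:ℝ) := by
    have : (Dc c c₄ c₅ + C8c c c₁ c₂ c₄) * (1 + Real.log (Real.log p))
        = Dc c c₄ c₅ * (1 + Real.log (Real.log p))
          + C8c c c₁ c₂ c₄ * (1 + Real.log (Real.log p)) := by ring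
    linarith [hE5, this.symm.le, this.le]
  have hRlb : C7c c c₅ / 2 * (Real.log p)^(0.005:ℝ) + 2
      + Dc c c₄ c₅ * (1 + Real.log (Real.log p))
      ≤ (c + g) * Real.sqrt (2 * n * Real.log p / k) - (c + g) ^ 2 * n / (2 * k)
        + Real.log ((n:ℝ) / (2 * p * Real.log p)) := by
    have hhalf : C7c c c₅ * (Real.log p)^(0.005:ℝ)
        = C7c c c₅ / 2 * (Real.log p)^(0.005:ℝ) + C7c c c₅ / 2 * (Real.log p)^(0.005:ℝ) := by
      ring
    linarith only [hC7G, hneg1, hneg2, hC8exp, hC8LL, hE5', hhalf, hc₂,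
      neg_abs_le (Real.log (c₁/2))]
  refine ⟨?_, hRlb⟩
  -- lower bound on log x
  have habs := abs_le.1 hmain_dist
  have hDcLL : 2 * Real.log (Real.log p) ≤ Dc c c₄ c₅ * Real.log (Real.log p) :=
    mul_le_mul_of_nonneg_right (by linarith only [hDc9]) hLL0
  have hDcexp : Dc c c₄ c₅ * (1 + Real.log (Real.log p))
      = Dc c c₄ c₅ + Dc c c₄ c₅ * Real.log (Real.log p) := by ring
  have hHnn : 0 ≤ C7c c c₅ / 2 * (Real.log p)^(0.005:ℝ) := by positivity
  have hlogx_lb : 2 ≤ Real.log x := by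
    linarith only [habs.1, hRlb, hDcLL, hDcexp.le, hDcexp.symm.le, hHnn, hDc9, hLL0]
  have hx0 : (0:ℝ) < x := by positivity
  have hx2 : 2 < x := by
    have h1 : Real.exp 2 ≤ Real.exp (Real.log x) := Real.exp_le_exp.2 hlogx_lb
    rw [Real.exp_log hx0] at h1
    linarith only [h1, Real.add_one_le_exp (2:ℝ)]
  have hx3 : 3 ≤ x := by
    have h1 : Real.exp 2 ≤ Real.exp (Real.log x) := Real.exp_le_exp.2 hlogx_lb
    rw [Real.exp_log hx0] at h1
    linarith only [h1, Real.add_one_le_exp (2:ℝ)]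
  have hIc : Ic k n p c g = ⌈x⌉₊ - 1 := Ic_eq_aux k n p c g hk1 hn1 hr hx2
  have hcx : 2 < ⌈x⌉₊ := Nat.lt_ceil.2 (by exact_mod_cast hx2)
  have hmcast : ((⌈x⌉₊ - 1 : ℕ) : ℝ) = (⌈x⌉₊ : ℝ) - 1 := by
    have h1 : (1:ℕ) ≤ ⌈x⌉₊ := by omega
    push_cast [h1]
    ring
  have hmub : ((⌈x⌉₊ - 1 : ℕ) : ℝ) < x := by
    rw [hmcast]
    have := Nat.ceil_lt_add_one (by linarith only [hx2] : (0:ℝ) ≤ x)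
    linarith only [this]
  have hmlb : x - 1 ≤ ((⌈x⌉₊ - 1 : ℕ) : ℝ) := by
    rw [hmcast]
    linarith only [Nat.le_ceil x]
  have hm0 : (0:ℝ) < ((⌈x⌉₊ - 1 : ℕ) : ℝ) := by linarith only [hmlb, hx3]
  have hlogm_ub : Real.log ((⌈x⌉₊ - 1 : ℕ) : ℝ) ≤ Real.log x :=
    Real.log_le_log hm0 hmub.le
  have hlogm_lb : Real.log x - 1 ≤ Real.log ((⌈x⌉₊ - 1 : ℕ) : ℝ) := by
    have h1 : x ≤ 2*(x-1) := by linarith only [hx3]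
    have h2 : Real.log x ≤ Real.log 2 + Real.log (x-1) := by
      calc Real.log x ≤ Real.log (2*(x-1)) :=
            Real.log_le_log (by linarith only [hx0]) h1
        _ = Real.log 2 + Real.log (x-1) := Real.log_mul two_ne_zero (by linarith only [hx3])
    have h3 : Real.log (x-1) ≤ Real.log ((⌈x⌉₊ - 1 : ℕ) : ℝ) :=
      Real.log_le_log (by linarith only [hx3]) hmlb
    linarith only [h2, h3, log_two_le]
  rw [hIc, abs_le]
  constructor
  · linarith only [habs.1, hlogm_lb, hDcexp.le, hDcexp.symm.le, hDcLL, hDc9, hLL0]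
  · linarith only [habs.2, hlogm_ub, hDcexp.le, hDcexp.symm.le, hDcLL, hDc9, hLL0]

lemma tendsto_aux (a b d : ℝ) (hd : 0 < d) :
    Tendsto (fun y : ℝ => (a * (1 + Real.log y) + b) / (d * y^(0.005:ℝ)))
      atTop (𝓝 0) := by
  have h1 : Tendsto (fun y : ℝ => Real.log y / y^(0.005:ℝ)) atTop (𝓝 0) :=
    (isLittleO_log_rpow_atTop (by norm_num)).tendsto_div_nhds_zero
  have h2 : Tendsto (fun y : ℝ => (y^(0.005:ℝ))⁻¹) atTop (𝓝 0) :=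
    (tendsto_rpow_atTop (by norm_num)).inv_tendsto_atTop
  have h3 := (h2.const_mul ((a+b)/d)).add (h1.const_mul (a/d))
  rw [mul_zero, mul_zero, add_zero] at h3
  apply h3.congr'
  filter_upwards [eventually_gt_atTop 0] with y hy
  have hyp : (0:ℝ) < y^(0.005:ℝ) := Real.rpow_pos_of_pos hy _
  field_simp
  ring

theorem Ic_asymptotics
    (k n p : ℕ → ℕ)
    (hk : Tendsto k atTop atTop) (hn : Tendsto n atTop atTop) (hp : Tendsto p atTop atTop)
    (c₁ c₂ c₃ c₄ c₅ : ℝ)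
    (hc₁ : 0 < c₁) (hc₂ : 0 < c₂) (hc₃ : 0 < c₃) (hc₄ : 0 < c₄) (hc₅ : 0 < c₅)
    (hnp : ∀ l, c₁ * p l / (Real.log (p l)) ^ c₂ ≤ (n l : ℝ) ∧ (n l : ℝ) ≤ c₃ * p l)
    (hkn : ∀ l, c₄ * n l ≤ (k l : ℝ) ∧
        (k l : ℝ) ≤ min ((0.99 : ℝ) * p l) (c₅ * n l * (Real.log (p l)) ^ (0.99 : ℝ)))
    (c : ℝ) (hc : 0 < c) (c' : ℝ) (hc' : 0 < c')
    (γ : ℕ → ℝ) (hγ : ∀ l, 0 < γ l ∧ γ l ≤ 1.01)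
    (hsep : ∀ᶠ l in atTop,
        c + γ l + c' < Real.sqrt (2 * k l * Real.log ((p l : ℝ) - k l) / n l)) :
    (∀ᶠ l in atTop, Jc (k l) (n l) (p l) c (γ l) ≤ Ic (k l) (n l) (p l) c (γ l)) ∧
    ∃ e : ℕ → ℝ, Tendsto e atTop (𝓝 0) ∧
      ∀ᶠ l in atTop, Real.log (Ic (k l) (n l) (p l) c (γ l)) =
        (1 + e l) * ((c + γ l) * Real.sqrt (2 * n l * Real.log (p l) / k l)
          - (c + γ l) ^ 2 * n l / (2 * k l) + Real.log (n l / (2 * p l * Real.log (p l)))) := by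
  constructor
  · filter_upwards with l
    unfold Jc Ic
    by_cases hne : ({I : ℕ | 1 ≤ I ∧ I ≤ k l ∧
        Real.sqrt (2 * k l * Real.log ((p l : ℝ) - k l) / n l) - c <
          -γ l + Real.sqrt (2 * k l * Real.log ((k l : ℝ) / I) / n l)}).Nonempty
    · refine csSup_le_csSup ⟨k l, fun I hI => hI.2.1⟩ hne ?_
      intro I hI
      exact ⟨hI.1, hI.2.1, by linarith [(hγ l).1, hI.2.2]⟩
    · rw [Set.not_nonempty_iff_eq_empty.1 hne, csSup_empty]
      exact bot_le
  · set R : ℕ → ℝ := fun l => (c + γ l) * Real.sqrt (2 * n l * Real.log (p l) / k l)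
      - (c + γ l) ^ 2 * n l / (2 * k l)
      + Real.log ((n l : ℝ) / (2 * p l * Real.log (p l))) with hR
    have hpc : Tendsto (fun l => (p l : ℝ)) atTop atTop :=
      tendsto_natCast_atTop_atTop.comp hp
    have hLPt : Tendsto (fun l => Real.log (p l)) atTop atTop :=
      Real.tendsto_log_atTop.comp hpc
    have hDc0 : (0:ℝ) ≤ Dc c c₄ c₅ := by
      have h1 : 0 ≤ |Real.log c₄| := abs_nonneg _
      have h2 : 0 ≤ |Real.log c₅| := abs_nonneg _
      have h3 : 0 ≤ 3*(c+1.01)*Real.sqrt (2/c₄) := by positivity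
      simp only [Dc]; linarith
    have hC70 : (0:ℝ) < C7c c c₅ := by
      simp only [C7c]; positivity
    -- eventual hypothesis E5
    have hE5 : ∀ᶠ l in atTop,
        (Dc c c₄ c₅ + C8c c c₁ c₂ c₄) * (1 + Real.log (Real.log (p l))) + 2
          ≤ C7c c c₅ / 2 * (Real.log (p l))^(0.005:ℝ) := by
      have ht := (tendsto_aux (Dc c c₄ c₅ + C8c c c₁ c₂ c₄) 2 1 one_pos).comp hLPt
      have hlt := ht.eventually_lt_const (show (0:ℝ) < C7c c c₅ / 2 by positivity)
      filter_upwards [hlt, hLPt.eventually_ge_atTop 1] with l h1 h2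
      have hG0 : (0:ℝ) < (Real.log (p l))^(0.005:ℝ) :=
        Real.rpow_pos_of_pos (by linarith) _
      have h3 := h1
      simp only [Function.comp_apply, one_mul] at h3
      rw [div_lt_iff₀ hG0] at h3
      linarith
    -- main eventual bounds
    have hmb : ∀ᶠ l in atTop,
        |Real.log (Ic (k l) (n l) (p l) c (γ l)) - R l|
            ≤ Dc c c₄ c₅ * (1 + Real.log (Real.log (p l))) ∧
          C7c c c₅ / 2 * (Real.log (p l))^(0.005:ℝ) + 2
            + Dc c c₄ c₅ * (1 + Real.log (Real.log (p l))) ≤ R l := by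
      filter_upwards [hk.eventually_ge_atTop 1, hn.eventually_ge_atTop 1,
        hpc.eventually_ge_atTop 300, hsep, hE5] with l h1 h2 h3 h4 h5
      exact main_bounds (k l) (n l) (p l) c c' (γ l) c₁ c₂ c₄ c₅ hc hc'
        (hγ l).1 (hγ l).2 hc₁ hc₂ hc₄ hc₅ h1 h2 h3 (hnp l).1 (hkn l).1
        (le_trans (hkn l).2 (min_le_left _ _))
        (le_trans (hkn l).2 (min_le_right _ _)) h4 h5
    refine ⟨fun l => Real.log (Ic (k l) (n l) (p l) c (γ l)) / R l - 1, ?_, ?_⟩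
    · apply squeeze_zero_norm' (a := fun l =>
        Dc c c₄ c₅ * (1 + Real.log (Real.log (p l)))
          / (C7c c c₅ / 2 * (Real.log (p l))^(0.005:ℝ)))
      · filter_upwards [hmb, hLPt.eventually_ge_atTop 1] with l hl hLP1
        obtain ⟨hd, hrlb⟩ := hl
        have hLL0 : 0 ≤ Real.log (Real.log (p l)) := Real.log_nonneg hLP1
        have hG0 : (0:ℝ) < (Real.log (p l))^(0.005:ℝ) :=
          Real.rpow_pos_of_pos (by linarith) _
        have hH0 : (0:ℝ) < C7c c c₅ / 2 * (Real.log (p l))^(0.005:ℝ) := by positivity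
        have hDLL : 0 ≤ Dc c c₄ c₅ * (1 + Real.log (Real.log (p l))) :=
          mul_nonneg hDc0 (by linarith)
        have hR0 : (0:ℝ) < R l :=
          lt_of_lt_of_le (by linarith only [hH0, hDLL]) hrlb
        have heq : Real.log (Ic (k l) (n l) (p l) c (γ l)) / R l - 1
            = (Real.log (Ic (k l) (n l) (p l) c (γ l)) - R l) / R l := by
          field_simp
        rw [Real.norm_eq_abs, heq, abs_div, abs_of_pos hR0]
        exact div_le_div₀ hDLL hd hH0 (by linarith)
      · have ht := (tendsto_aux (Dc c c₄ c₅) 0 (C7c c c₅ / 2) (by positivity)).comp hLPt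
        apply ht.congr
        intro l
        simp only [Function.comp_apply, add_zero]
    · filter_upwards [hmb, hLPt.eventually_ge_atTop 1] with l hl hLP1
      obtain ⟨hd, hrlb⟩ := hl
      have hLL0 : 0 ≤ Real.log (Real.log (p l)) := Real.log_nonneg hLP1
      have hG0 : (0:ℝ) < (Real.log (p l))^(0.005:ℝ) :=
        Real.rpow_pos_of_pos (by linarith) _
      have hDLL : 0 ≤ Dc c c₄ c₅ * (1 + Real.log (Real.log (p l))) :=
        mul_nonneg hDc0 (by linarith)
      have hH0 : (0:ℝ) < C7c c c₅ / 2 * (Real.log (p l))^(0.005:ℝ) := by positivity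
      have hR0 : (0:ℝ) < R l :=
        lt_of_lt_of_le (by linarith only [hH0, hDLL]) hrlb
      show Real.log (Ic (k l) (n l) (p l) c (γ l))
        = (1 + (Real.log (Ic (k l) (n l) (p l) c (γ l)) / R l - 1)) * R l
      field_simp
      ring
end

section
/- Let A be a j×j real symmetric positive definite matrix all of whose eigenvalues lie in the interval [1 − θ, 1 + θ] for some 0 < θ < 1, and let s ∈ {−1, +1}^j be any sign vector. Then ‖A^{−1}s − s‖₂ ≤ θ·√j/(1 − θ). Consequently, if θ·√j/(1 − θ) < 1, then every coordinate of A^{−1}s has the same sign as the corresponding coordinate of s, i.e., s_i·(A^{−1}s)_i > 0 for all i ∈ {1, …, j}. -/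
open Matrix

theorem aux_inv (j : ℕ) (A V : Matrix (Fin j) (Fin j) ℝ) (lam : Fin j → ℝ)
    (hVV : V * Vᵀ = 1) (hVV' : Vᵀ * V = 1) (hlam : ∀ i, lam i ≠ 0)
    (hspec : A = V * Matrix.diagonal lam * Vᵀ) :
    A⁻¹ = V * Matrix.diagonal (fun i => (lam i)⁻¹) * Vᵀ := by
  apply Matrix.inv_eq_right_inv
  have hD : Matrix.diagonal lam * Matrix.diagonal (fun i => (lam i)⁻¹) = 1 := by
    ext i k
    rw [Matrix.diagonal_mul_diagonal]
    rcases eq_or_ne i k with h | h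
    · subst h; simp [mul_inv_cancel₀ (hlam i)]
    · simp [Matrix.diagonal_apply_ne _ h, Matrix.one_apply_ne h]
  calc A * (V * Matrix.diagonal (fun i => (lam i)⁻¹) * Vᵀ)
      = (V * Matrix.diagonal lam) * (Vᵀ * V) *
        (Matrix.diagonal (fun i => (lam i)⁻¹) * Vᵀ) := by rw [hspec]; noncomm_ring
    _ = V * (Matrix.diagonal lam * Matrix.diagonal (fun i => (lam i)⁻¹)) * Vᵀ := by
        rw [hVV']; noncomm_ring
    _ = 1 := by rw [hD, Matrix.mul_one, hVV]

theorem aux_norm (j : ℕ) (V : Matrix (Fin j) (Fin j) ℝ) (u : Fin j → ℝ)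
    (hVV' : Vᵀ * V = 1) :
    ∑ i, (V.mulVec u i) ^ 2 = ∑ i, u i ^ 2 := by
  have h1 : ∀ v : Fin j → ℝ, ∑ i, v i ^ 2 = v ⬝ᵥ v := by
    intro v; simp [dotProduct, sq]
  rw [h1, h1, Matrix.dotProduct_mulVec, ← Matrix.vecMul_transpose, Matrix.vecMul_vecMul,
    hVV', Matrix.vecMul_one]

theorem inverse_sign_preservation
    (j : ℕ) (θ : ℝ) (hθ0 : 0 < θ) (hθ1 : θ < 1)
    (A : Matrix (Fin j) (Fin j) ℝ) (hA : A.PosDef)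
    -- all eigenvalues of A lie in [1 − θ, 1 + θ]
    (heig : ∀ i, 1 - θ ≤ hA.1.eigenvalues i ∧ hA.1.eigenvalues i ≤ 1 + θ)
    (s : Fin j → ℝ) (hs : ∀ i, s i = 1 ∨ s i = -1) :
    Real.sqrt (∑ i, (A⁻¹.mulVec s i - s i) ^ 2) ≤ θ * Real.sqrt j / (1 - θ) ∧
    (θ * Real.sqrt j / (1 - θ) < 1 → ∀ i, 0 < s i * A⁻¹.mulVec s i) := by
  classical
  have h1θ : (0:ℝ) < 1 - θ := by linarith
  set lam := hA.1.eigenvalues with hlamdef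
  have hlam_pos : ∀ i, 0 < lam i := fun i => lt_of_lt_of_le h1θ (heig i).1
  set V : Matrix (Fin j) (Fin j) ℝ := (hA.1.eigenvectorUnitary : Matrix (Fin j) (Fin j) ℝ)
    with hVdef
  have hst : star V = Vᵀ := by ext i k; simp [Matrix.star_apply]
  have h1 : V * Vᵀ = 1 := by
    rw [← hst]; exact Matrix.mem_unitaryGroup_iff.mp hA.1.eigenvectorUnitary.2
  have h2 : Vᵀ * V = 1 := by
    rw [← hst]; exact Matrix.mem_unitaryGroup_iff'.mp hA.1.eigenvectorUnitary.2
  have hspec : A = V * Matrix.diagonal lam * Vᵀ := by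
    have := hA.1.spectral_theorem
    simp only [Unitary.conjStarAlgAut_apply, Unitary.coe_star] at this
    rw [this, ← hst]
    rfl
  have hinv : A⁻¹ = V * Matrix.diagonal (fun i => (lam i)⁻¹) * Vᵀ :=
    aux_inv j A V lam h1 h2 (fun i => (hlam_pos i).ne') hspec
  set w : Fin j → ℝ := Vᵀ.mulVec s with hwdef
  set u : Fin j → ℝ := fun i => ((lam i)⁻¹ - 1) * w i with hudef
  -- x - s = V *ᵥ u
  have hDw : (Matrix.diagonal fun k => (lam k)⁻¹).mulVec w = fun k => (lam k)⁻¹ * w k := by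
    funext k; simp [Matrix.mulVec_diagonal]
  have hx : A⁻¹.mulVec s = V.mulVec (fun k => (lam k)⁻¹ * w k) := by
    rw [hinv, ← Matrix.mulVec_mulVec, ← Matrix.mulVec_mulVec, ← hwdef, hDw]
  have hsv : s = V.mulVec w := by
    rw [hwdef, Matrix.mulVec_mulVec, h1, Matrix.one_mulVec]
  have hxs : ∀ i, A⁻¹.mulVec s i - s i = V.mulVec u i := by
    intro i
    rw [hx]
    conv_lhs => rw [hsv]
    simp only [Matrix.mulVec, dotProduct]
    rw [← Finset.sum_sub_distrib]
    apply Finset.sum_congr rfl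
    intro k _
    simp only [hudef]
    ring
  -- sum of w squares
  have hw2 : ∑ i, w i ^ 2 = (j : ℝ) := by
    have := aux_norm j Vᵀ s (by rw [Matrix.transpose_transpose, h1])
    rw [hwdef, this]
    have : ∀ i, s i ^ 2 = 1 := by
      intro i; rcases hs i with h | h <;> rw [h] <;> norm_num
    simp [this]
  -- coefficient bound
  have hcoef : ∀ i, ((lam i)⁻¹ - 1) ^ 2 ≤ (θ / (1 - θ)) ^ 2 := by
    intro i
    have habs : |(lam i)⁻¹ - 1| ≤ θ / (1 - θ) := by
      have : (lam i)⁻¹ - 1 = (1 - lam i) / lam i := by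
        rw [eq_div_iff (hlam_pos i).ne', sub_mul, inv_mul_cancel₀ (hlam_pos i).ne', one_mul]
      rw [this, abs_div]
      have hnum : |1 - lam i| ≤ θ := by
        rw [abs_le]; constructor <;> [linarith [(heig i).2]; linarith [(heig i).1]]
      have hden : 1 - θ ≤ |lam i| := by
        rw [abs_of_pos (hlam_pos i)]; exact (heig i).1
      exact div_le_div₀ hθ0.le hnum h1θ hden
    calc ((lam i)⁻¹ - 1) ^ 2 = |(lam i)⁻¹ - 1| ^ 2 := (sq_abs _).symm
      _ ≤ (θ / (1 - θ)) ^ 2 := by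
          apply pow_le_pow_left₀ (abs_nonneg _) habs
  -- main sum bound
  have hsum : ∑ i, (A⁻¹.mulVec s i - s i) ^ 2 ≤ (θ / (1 - θ)) ^ 2 * j := by
    have e1 : ∑ i, (A⁻¹.mulVec s i - s i) ^ 2 = ∑ i, (V.mulVec u i) ^ 2 := by
      apply Finset.sum_congr rfl; intro i _; rw [hxs i]
    rw [e1, aux_norm j V u h2]
    have : ∀ i ∈ Finset.univ, u i ^ 2 ≤ (θ / (1 - θ)) ^ 2 * w i ^ 2 := by
      intro i _
      rw [hudef]
      have : (((lam i)⁻¹ - 1) * w i) ^ 2 = ((lam i)⁻¹ - 1) ^ 2 * w i ^ 2 := by ring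
      rw [this]
      exact mul_le_mul_of_nonneg_right (hcoef i) (sq_nonneg _)
    calc ∑ i, u i ^ 2 ≤ ∑ i, (θ / (1 - θ)) ^ 2 * w i ^ 2 := Finset.sum_le_sum this
      _ = (θ / (1 - θ)) ^ 2 * ∑ i, w i ^ 2 := by rw [Finset.mul_sum]
      _ = (θ / (1 - θ)) ^ 2 * j := by rw [hw2]
  have hb : θ * Real.sqrt j / (1 - θ) = Real.sqrt ((θ / (1 - θ)) ^ 2 * j) := by
    rw [Real.sqrt_mul (sq_nonneg _), Real.sqrt_sq (by positivity)]
    ring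
  have hmain : Real.sqrt (∑ i, (A⁻¹.mulVec s i - s i) ^ 2) ≤ θ * Real.sqrt j / (1 - θ) := by
    rw [hb]
    exact Real.sqrt_le_sqrt hsum
  refine ⟨hmain, fun hlt i => ?_⟩
  have hterm : |A⁻¹.mulVec s i - s i| < 1 := by
    have h1' : |A⁻¹.mulVec s i - s i| = Real.sqrt ((A⁻¹.mulVec s i - s i) ^ 2) :=
      (Real.sqrt_sq_eq_abs _).symm
    have h2' : (A⁻¹.mulVec s i - s i) ^ 2 ≤ ∑ k, (A⁻¹.mulVec s k - s k) ^ 2 :=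
      Finset.single_le_sum (f := fun k => (A⁻¹.mulVec s k - s k) ^ 2)
        (fun k _ => sq_nonneg _) (Finset.mem_univ i)
    calc |A⁻¹.mulVec s i - s i| ≤ Real.sqrt (∑ k, (A⁻¹.mulVec s k - s k) ^ 2) := by
          rw [h1']; exact Real.sqrt_le_sqrt h2'
      _ ≤ θ * Real.sqrt j / (1 - θ) := hmain
      _ < 1 := hlt
  rw [abs_lt] at hterm
  rcases hs i with h | h <;> rw [h] at hterm ⊢ <;> nlinarith [hterm.1, hterm.2]
end
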